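/- The module M(g,h;ℤᵏ) over the high rank W-algebra W(2,2) is reducible if and only if g ∈ ℤᵏ and h ∈ {0,1}. -/

import Mathlib

/-- The action of `L_α` on the intermediate series module `M(g,h;ℤᵏ)`
(with basis `v_β = single β 1`): `L_α · v_β = (g + β + hα) v_{α+β}`.
The elements `W_α` and `C` act as zero. -/
noncomputable def Lact (k : ℕ) (ε : (Fin k → ℤ) →+ ℂ) (g h : ℂ) (α : Fin k → ℤ) :
    ((Fin k → ℤ) →₀ ℂ) →ₗ[ℂ] ((Fin k → ℤ) →₀ ℂ) :=
  Finsupp.lsum ℂ fun β =>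
    LinearMap.toSpanSingleton ℂ _ ((g + ε β + h * ε α) • Finsupp.single (α + β) (1 : ℂ))

lemma Lact_single (k : ℕ) (ε : (Fin k → ℤ) →+ ℂ) (g h : ℂ) (α β : Fin k → ℤ) (c : ℂ) :
    Lact k ε g h α (Finsupp.single β c)
      = Finsupp.single (α + β) (c * (g + ε β + h * ε α)) := by
  rw [Lact, Finsupp.lsum_single, LinearMap.toSpanSingleton_apply, smul_smul,
    Finsupp.smul_single, smul_eq_mul, mul_one]

lemma Lact_apply (k : ℕ) (ε : (Fin k → ℤ) →+ ℂ) (g h : ℂ) (α : Fin k → ℤ)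
    (v : (Fin k → ℤ) →₀ ℂ) (γ : Fin k → ℤ) :
    (Lact k ε g h α v) γ = v (γ - α) * (g + ε (γ - α) + h * ε α) := by
  induction v using Finsupp.induction_linear with
  | zero => simp
  | add f f' hf hf' => simp [map_add, hf, hf', add_mul]
  | single β c =>
      rw [Lact_single, Finsupp.single_apply, Finsupp.single_apply]
      by_cases hb : α + β = γ
      · rw [if_pos hb, if_pos (by rw [← hb]; abel), ← hb]
        simp
      · rw [if_neg hb, if_neg (fun hc => hb (by rw [hc]; abel)), zero_mul]

-- moving between basis vectors
lemma move (k : ℕ) (ε : (Fin k → ℤ) →+ ℂ) (g h : ℂ)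
    (N : Submodule ℂ ((Fin k → ℤ) →₀ ℂ))
    (hN : ∀ (α : Fin k → ℤ), ∀ v ∈ N, Lact k ε g h α v ∈ N)
    (β : Fin k → ℤ) (hβ : Finsupp.single β (1:ℂ) ∈ N) (α : Fin k → ℤ)
    (hc : g + ε β + h * ε α ≠ 0) : Finsupp.single (α + β) (1:ℂ) ∈ N := by
  have h1 := hN α _ hβ
  rw [Lact_single, one_mul] at h1
  have h2 := N.smul_mem (g + ε β + h * ε α)⁻¹ h1
  rwa [Finsupp.smul_single, smul_eq_mul, inv_mul_cancel₀ hc] at h2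

-- extracting a basis vector from a nonzero element of an invariant submodule
lemma extract (k : ℕ) (ε : (Fin k → ℤ) →+ ℂ) (hε : Function.Injective ε) (g h : ℂ)
    (N : Submodule ℂ ((Fin k → ℤ) →₀ ℂ))
    (hN : ∀ (α : Fin k → ℤ), ∀ v ∈ N, Lact k ε g h α v ∈ N)
    (v : (Fin k → ℤ) →₀ ℂ) (hv : v ∈ N) (hv0 : v ≠ 0) :
    ∃ β, Finsupp.single β (1:ℂ) ∈ N := by
  obtain ⟨n, hn⟩ : ∃ n, v.support.card ≤ n := ⟨_, le_refl _⟩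
  induction n generalizing v with
  | zero =>
      exact absurd (Finsupp.card_support_eq_zero.mp (Nat.le_zero.mp hn)) hv0
  | succ n ih =>
      rcases eq_or_ne v.support.card 1 with h1 | h1
      · obtain ⟨β, c, hc, hveq⟩ := Finsupp.card_support_eq_one'.mp h1
        have hmem := N.smul_mem c⁻¹ hv
        rw [hveq, Finsupp.smul_single, smul_eq_mul, inv_mul_cancel₀ hc] at hmem
        exact ⟨β, hmem⟩
      · -- support has ≥ 2 elements
        obtain ⟨β₀, hβ₀⟩ := Finsupp.support_nonempty_iff.mpr hv0
        set w := Lact k ε g h 0 v - (g + ε β₀) • v with hw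
        have hwmem : w ∈ N := N.sub_mem (hN 0 v hv) (N.smul_mem _ hv)
        have hwap : ∀ γ, w γ = v γ * (ε γ - ε β₀) := by
          intro γ
          rw [hw]
          simp only [Finsupp.sub_apply, Finsupp.smul_apply, Lact_apply, sub_zero,
            map_zero, mul_zero, add_zero, smul_eq_mul]
          ring
        -- w ≠ 0
        have hcard2 : 2 ≤ v.support.card := by
          have h0 : v.support.card ≠ 0 := fun hc => hv0 (Finsupp.card_support_eq_zero.mp hc)
          omega
        obtain ⟨β₁, hβ₁mem, hβ₁ne⟩ : ∃ β₁ ∈ v.support, β₁ ≠ β₀ := by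
          have := Finset.exists_mem_ne hcard2 β₀
          exact this
        have hw0 : w ≠ 0 := by
          intro h0
          have := hwap β₁
          rw [h0] at this
          simp only [Finsupp.coe_zero, Pi.zero_apply] at this
          rcases mul_eq_zero.mp this.symm with h2 | h2
          · exact (Finsupp.mem_support_iff.mp hβ₁mem) h2
          · exact hβ₁ne (hε (sub_eq_zero.mp h2))
        have hsub : w.support ⊆ v.support.erase β₀ := by
          intro γ hγ
          have hγ' : w γ ≠ 0 := Finsupp.mem_support_iff.mp hγ
          have hwγ := hwap γ
          rw [Finset.mem_erase, Finsupp.mem_support_iff]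
          constructor
          · rintro rfl
            exact hγ' (by rw [hwγ, sub_self, mul_zero])
          · intro h2
            exact hγ' (by rw [hwγ, h2, zero_mul])
        have : w.support.card ≤ n := by
          have h3 := Finset.card_le_card hsub
          have h4 := Finset.card_erase_of_mem hβ₀
          omega
        exact ih w hwmem hw0 this

/-- the module `M(g,h;ℤᵏ)` over the high rank `W`-algebra `W(2,2)`
(on which `W_α` and `C` act as zero, so a submodule is just a subspace invariant under
all `L_α`) is reducible if and only if `g ∈ ℤᵏ` (viewed inside `ℂ` via the injective
embedding `ε`) and `h ∈ {0,1}`. -/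
theorem stmt2 (k : ℕ) (hk : 0 < k) (ε : (Fin k → ℤ) →+ ℂ)
    (hε : Function.Injective ε) (g h : ℂ) :
    (∃ N : Submodule ℂ ((Fin k → ℤ) →₀ ℂ),
        (∀ (α : Fin k → ℤ), ∀ v ∈ N, Lact k ε g h α v ∈ N) ∧ N ≠ ⊥ ∧ N ≠ ⊤)
      ↔ ((∃ β : Fin k → ℤ, g = ε β) ∧ (h = 0 ∨ h = 1)) := by
  have he : (fun _ => (1:ℤ) : Fin k → ℤ) ≠ 0 := by
    intro h0
    have := congrFun h0 ⟨0, hk⟩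
    simp at this
  constructor
  · rintro ⟨N, hN, hNbot, hNtop⟩
    by_contra hC
    -- aim: N = ⊤, contradiction
    obtain ⟨v, hvN, hv0⟩ := Submodule.ne_bot_iff N |>.mp hNbot
    obtain ⟨β, hβ⟩ := extract k ε hε g h N hN v hvN hv0
    have hgout : ¬ (h = 0 ∨ h = 1) ∨ (∀ δ, g ≠ ε δ) := by
      by_cases hh : h = 0 ∨ h = 1
      · right
        intro δ hgδ
        exact hC ⟨⟨δ, hgδ⟩, hh⟩
      · left; exact hh
    have allsingle : ∀ β' : Fin k → ℤ, Finsupp.single β' (1:ℂ) ∈ N := by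
      intro β'
      by_cases hh01 : h = 0 ∨ h = 1
      · -- one step; g not in range
        have hg : ∀ δ, g ≠ ε δ := by
          rcases hgout with hbad | hg
          · exact absurd hh01 hbad
          · exact hg
        have hc : g + ε β + h * ε (β' - β) ≠ 0 := by
          rcases hh01 with h0 | h1
          · rw [h0, zero_mul, add_zero]
            intro hz
            exact hg (-β) (by rw [map_neg]; linear_combination hz)
          · rw [h1, one_mul]
            intro hz
            apply hg (-(β + (β' - β)))
            rw [map_neg, map_add]
            linear_combination hz
        have := move k ε g h N hN β hβ (β' - β) hc
        rwa [show β' - β + β = β' from by abel] at this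
      · -- two steps
        push_neg at hh01
        obtain ⟨hh0, hh1⟩ := hh01
        have key : ∃ γ : Fin k → ℤ,
            g + ε β + h * ε (γ - β) ≠ 0 ∧ g + ε γ + h * ε (β' - γ) ≠ 0 := by
          by_contra hno'
          push_neg at hno'
          have hno : ∀ γ : Fin k → ℤ, g + ε β + h * ε (γ - β) = 0 ∨
              g + ε γ + h * ε (β' - γ) = 0 := by
            intro γ
            by_cases hx : g + ε β + h * ε (γ - β) = 0
            · exact Or.inl hx
            · exact Or.inr (hno' γ hx)
          have key1 : ∀ γ₁ γ₂, g + ε β + h * ε (γ₁ - β) = 0 →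
              g + ε β + h * ε (γ₂ - β) = 0 → γ₁ = γ₂ := by
            intro γ₁ γ₂ e1 e2
            apply hε
            have : h * (ε γ₁ - ε γ₂) = 0 := by
              rw [map_sub] at e1 e2
              linear_combination e1 - e2
            rcases mul_eq_zero.mp this with h' | h'
            · exact absurd h' hh0
            · linear_combination h'
          have key2 : ∀ γ₁ γ₂, g + ε γ₁ + h * ε (β' - γ₁) = 0 →
              g + ε γ₂ + h * ε (β' - γ₂) = 0 → γ₁ = γ₂ := by
            intro γ₁ γ₂ e1 e2
            apply hε
            have : (1 - h) * (ε γ₁ - ε γ₂) = 0 := by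
              rw [map_sub] at e1 e2
              linear_combination e1 - e2
            rcases mul_eq_zero.mp this with h' | h'
            · exact absurd (by linear_combination -h' : h = 1) hh1
            · linear_combination h'
          set d : ℤ → (Fin k → ℤ) := fun n => fun _ => n with hd
          have hdinj : ∀ m n : ℤ, d m = d n → m = n := by
            intro m n hmn
            exact congrFun hmn ⟨0, hk⟩
          rcases hno (d 1) with e1 | e1 <;> rcases hno (d 2) with e2 | e2 <;>
            rcases hno (d 3) with e3 | e3
          · exact absurd (hdinj _ _ (key1 _ _ e1 e2)) (by norm_num)
          · exact absurd (hdinj _ _ (key1 _ _ e1 e2)) (by norm_num)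
          · exact absurd (hdinj _ _ (key1 _ _ e1 e3)) (by norm_num)
          · exact absurd (hdinj _ _ (key2 _ _ e2 e3)) (by norm_num)
          · exact absurd (hdinj _ _ (key1 _ _ e2 e3)) (by norm_num)
          · exact absurd (hdinj _ _ (key2 _ _ e1 e3)) (by norm_num)
          · exact absurd (hdinj _ _ (key2 _ _ e1 e2)) (by norm_num)
          · exact absurd (hdinj _ _ (key2 _ _ e1 e2)) (by norm_num)
        obtain ⟨γ, hc1, hc2⟩ := key
        have step1 := move k ε g h N hN β hβ (γ - β) hc1
        rw [show γ - β + β = γ from by abel] at step1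
        have step2 := move k ε g h N hN γ step1 (β' - γ) hc2
        rwa [show β' - γ + γ = β' from by abel] at step2
    apply hNtop
    rw [Submodule.eq_top_iff']
    intro x
    rw [← Finsupp.sum_single x, Finsupp.sum]
    refine N.sum_mem fun b _ => ?_
    have := N.smul_mem (x b) (allsingle b)
    rwa [Finsupp.smul_single, smul_eq_mul, mul_one] at this
  · rintro ⟨⟨γ, hg⟩, h0 | h1⟩
    · -- h = 0 : span of single (-γ) 1
      refine ⟨Submodule.span ℂ {Finsupp.single (-γ) (1:ℂ)}, ?_, ?_, ?_⟩
      · intro α v hv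
        rw [Submodule.mem_span_singleton] at hv
        obtain ⟨c, rfl⟩ := hv
        rw [map_smul, Lact_single]
        have hz : (1:ℂ) * (g + ε (-γ) + h * ε α) = 0 := by
          rw [hg, h0, map_neg]; ring
        rw [hz, Finsupp.single_zero, smul_zero]
        exact Submodule.zero_mem _
      · rw [Submodule.ne_bot_iff]
        exact ⟨Finsupp.single (-γ) (1:ℂ), Submodule.mem_span_singleton_self _,
          fun hz => one_ne_zero (Finsupp.single_eq_zero.mp hz)⟩
      · intro htop
        have hmem : Finsupp.single (-γ + fun _ => (1:ℤ)) (1:ℂ) ∈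
            Submodule.span ℂ {Finsupp.single (-γ) (1:ℂ)} := htop ▸ Submodule.mem_top
        rw [Submodule.mem_span_singleton] at hmem
        obtain ⟨c, hc⟩ := hmem
        have := congrArg (fun f : (Fin k → ℤ) →₀ ℂ => f (-γ + fun _ => (1:ℤ))) hc
        have hne : -γ ≠ (-γ + fun _ => (1:ℤ)) := by
          intro hcc
          exact he (by funext i; have := congrFun hcc i; simpa using this.symm)
        simp only [Finsupp.smul_apply, Finsupp.single_apply, if_neg hne, if_pos rfl,
          smul_zero] at this
        exact one_ne_zero this.symm
    · -- h = 1 : kernel of evaluation at -γ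
      refine ⟨LinearMap.ker (Finsupp.lapply (-γ) : ((Fin k → ℤ) →₀ ℂ) →ₗ[ℂ] ℂ), ?_, ?_, ?_⟩
      · intro α v _
        rw [LinearMap.mem_ker, Finsupp.lapply_apply, Lact_apply]
        have : g + ε (-γ - α) + h * ε α = 0 := by
          rw [hg, h1, map_sub, map_neg]; ring
        rw [this, mul_zero]
      · rw [Submodule.ne_bot_iff]
        refine ⟨Finsupp.single (-γ + fun _ => (1:ℤ)) (1:ℂ), ?_,
          fun hz => one_ne_zero (Finsupp.single_eq_zero.mp hz)⟩
        rw [LinearMap.mem_ker, Finsupp.lapply_apply, Finsupp.single_apply, if_neg]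
        intro hcc
        exact he (by funext i; have := congrFun hcc i; simp at this)
      · intro htop
        have hmem : Finsupp.single (-γ) (1:ℂ) ∈
            LinearMap.ker (Finsupp.lapply (-γ) : ((Fin k → ℤ) →₀ ℂ) →ₗ[ℂ] ℂ) :=
          htop ▸ Submodule.mem_top
        rw [LinearMap.mem_ker, Finsupp.lapply_apply, Finsupp.single_apply, if_pos rfl] at hmem
        exact one_ne_zero hmem
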